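/- Let E ∼ {E_a} be a CP map on H_S ⊗ H_B that is sub-trace-preserving on the code: P(Σ_a E_a† E_a)P = γ² P for a constant γ > 0, where P = P_C ⊗ 1_B. If the OSQEC conditions P_C E_{a;kℓ}† E_{b;mn} P_C = Λ_{akℓ,bmn} P_C hold (Λ Hermitian), then there is a CPTP recovery R = R_S ⊗ id_B with Tr_B{(R∘E)(ρ)} = γ² Tr_B{ρ} for all states ρ supported on C ⊗ H_B. -/

import Mathlib

open Matrix
open scoped BigOperators Kronecker ComplexOrder

namespace OSQEC11


noncomputable def trB {dS dB : ℕ}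
    (M : Matrix (Fin dS × Fin dB) (Fin dS × Fin dB) ℂ) :
    Matrix (Fin dS) (Fin dS) ℂ :=
  Matrix.of fun i j => ∑ k : Fin dB, M (i, k) (j, k)

def pmel {dS dB : ℕ} (M : Matrix (Fin dS × Fin dB) (Fin dS × Fin dB) ℂ)
    (k ℓ : Fin dB) : Matrix (Fin dS) (Fin dS) ℂ :=
  Matrix.of fun i j => M (i, k) (j, ℓ)

variable {dS dB : ℕ}

lemma pmel_apply (M : Matrix (Fin dS × Fin dB) (Fin dS × Fin dB) ℂ) (k ℓ : Fin dB)
    (i j : Fin dS) : pmel M k ℓ i j = M (i, k) (j, ℓ) := rfl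

lemma trB_eq (M : Matrix (Fin dS × Fin dB) (Fin dS × Fin dB) ℂ) :
    trB M = ∑ k, pmel M k k := by
  ext i j
  simp [trB, pmel, Matrix.sum_apply]

lemma pmel_sum {α : Type*} (s : Finset α)
    (f : α → Matrix (Fin dS × Fin dB) (Fin dS × Fin dB) ℂ) (k ℓ : Fin dB) :
    pmel (∑ a ∈ s, f a) k ℓ = ∑ a ∈ s, pmel (f a) k ℓ := by
  ext i j
  simp [pmel, Matrix.sum_apply]

lemma pmel_smul (c : ℂ) (M : Matrix (Fin dS × Fin dB) (Fin dS × Fin dB) ℂ) (k ℓ : Fin dB) :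
    pmel (c • M) k ℓ = c • pmel M k ℓ := by
  ext i j; simp [pmel]

lemma pmel_mul (M N : Matrix (Fin dS × Fin dB) (Fin dS × Fin dB) ℂ) (k ℓ : Fin dB) :
    pmel (M * N) k ℓ = ∑ m, pmel M k m * pmel N m ℓ := by
  ext i j
  simp only [pmel, Matrix.mul_apply, Matrix.sum_apply, Matrix.of_apply]
  rw [Fintype.sum_prod_type]
  exact Finset.sum_comm

lemma pmel_conjTranspose (M : Matrix (Fin dS × Fin dB) (Fin dS × Fin dB) ℂ) (k ℓ : Fin dB) :
    pmel Mᴴ k ℓ = (pmel M ℓ k)ᴴ := by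
  ext i j; simp [pmel, Matrix.conjTranspose_apply]

lemma pmel_kron (S : Matrix (Fin dS) (Fin dS) ℂ) (k ℓ : Fin dB) :
    pmel (S ⊗ₖ (1 : Matrix (Fin dB) (Fin dB) ℂ)) k ℓ = if k = ℓ then S else 0 := by
  ext i j
  by_cases h : k = ℓ <;> simp [pmel, Matrix.kroneckerMap_apply, Matrix.one_apply, h]

lemma kron_one_conjTranspose (S : Matrix (Fin dS) (Fin dS) ℂ) :
    (S ⊗ₖ (1 : Matrix (Fin dB) (Fin dB) ℂ))ᴴ = Sᴴ ⊗ₖ (1 : Matrix (Fin dB) (Fin dB) ℂ) := by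
  ext ⟨i, k⟩ ⟨j, l⟩
  simp [Matrix.conjTranspose_apply, Matrix.kroneckerMap_apply, Matrix.one_apply]
  by_cases h : l = k <;> simp [h, eq_comm] <;> simp [Ne.symm h]

lemma pmel_kron_mul (S : Matrix (Fin dS) (Fin dS) ℂ)
    (M : Matrix (Fin dS × Fin dB) (Fin dS × Fin dB) ℂ) (k ℓ : Fin dB) :
    pmel ((S ⊗ₖ (1 : Matrix (Fin dB) (Fin dB) ℂ)) * M) k ℓ = S * pmel M k ℓ := by
  rw [pmel_mul]
  simp [pmel_kron]

lemma pmel_mul_kron (S : Matrix (Fin dS) (Fin dS) ℂ)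
    (M : Matrix (Fin dS × Fin dB) (Fin dS × Fin dB) ℂ) (k ℓ : Fin dB) :
    pmel (M * (S ⊗ₖ (1 : Matrix (Fin dB) (Fin dB) ℂ))) k ℓ = pmel M k ℓ * S := by
  rw [pmel_mul]
  simp [pmel_kron]



lemma trace_cms {m n : Type*} [Fintype m] [Fintype n] (B : Matrix m n ℂ) :
    (Bᴴ * B).trace = ((∑ i, ∑ j, Complex.normSq (B i j) : ℝ) : ℂ) := by
  have h : ∀ j, (Bᴴ * B) j j = ((∑ i, Complex.normSq (B i j) : ℝ) : ℂ) := by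
    intro j
    simp only [Matrix.mul_apply, Matrix.conjTranspose_apply]
    push_cast
    refine Finset.sum_congr rfl fun i _ => ?_
    simp [Complex.star_def, mul_comm, Complex.mul_conj]
  rw [Matrix.trace]
  simp only [Matrix.diag, h]
  push_cast
  rw [Finset.sum_comm]

theorem recovery_exists {dS : ℕ} {J : Type*} [Fintype J] [DecidableEq J]
    (PC : Matrix (Fin dS) (Fin dS) ℂ) (hPCH : PC.IsHermitian) (hPCproj : PC * PC = PC)
    (hPC0 : PC ≠ 0)
    (F : J → Matrix (Fin dS) (Fin dS) ℂ) (Λ : J → J → ℂ)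
    (hΛH : ∀ p q, Λ p q = star (Λ q p))
    (hKL : ∀ p q, PC * (F p)ᴴ * F q * PC = Λ p q • PC) :
    ∃ (N : ℕ) (R : Option (Fin N) → Matrix (Fin dS) (Fin dS) ℂ),
      (∑ c, (R c)ᴴ * R c = 1) ∧
      ∀ (p q : J) (X : Matrix (Fin dS) (Fin dS) ℂ), PC * X * PC = X →
        ∑ c, R c * (F p * X * (F q)ᴴ) * (R c)ᴴ = Λ q p • X := by
  classical
  -- trace of PC
  set T : ℝ := ∑ i, ∑ j, Complex.normSq (PC i j) with hT
  have hT0 : 0 ≤ T :=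
    Finset.sum_nonneg fun i _ => Finset.sum_nonneg fun j _ => Complex.normSq_nonneg _
  have hTne : T ≠ 0 := by
    intro h
    apply hPC0
    ext i j
    have h1 : ∀ i ∈ (Finset.univ : Finset (Fin dS)),
        (0:ℝ) ≤ ∑ j, Complex.normSq (PC i j) :=
      fun i _ => Finset.sum_nonneg fun j _ => Complex.normSq_nonneg _
    have h2 := (Finset.sum_eq_zero_iff_of_nonneg h1).mp h.symm.symm i (Finset.mem_univ i)
    have h3 := (Finset.sum_eq_zero_iff_of_nonneg
      (fun j _ => Complex.normSq_nonneg _)).mp h2 j (Finset.mem_univ j)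
    simpa using Complex.normSq_eq_zero.mp h3
  have hTpos : 0 < T := lt_of_le_of_ne hT0 (Ne.symm hTne)
  have hPCtr : PC.trace = (T : ℂ) := by
    have h4 : PC = PCᴴ * PC := by rw [hPCH, hPCproj]
    calc PC.trace = (PCᴴ * PC).trace := by conv_lhs => rw [h4]
    _ = (T : ℂ) := trace_cms PC
  -- Λ is PSD
  have hΛMH : (Matrix.of Λ).IsHermitian := by
    ext p q
    simp only [Matrix.conjTranspose_apply, Matrix.of_apply]
    exact (hΛH p q).symm
  have hΛPSD : (Matrix.of Λ).PosSemidef := by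
    refine Matrix.PosSemidef.of_dotProduct_mulVec_nonneg hΛMH fun x => ?_
    set B : Matrix (Fin dS) (Fin dS) ℂ := ∑ p, x p • (F p * PC) with hBdef
    have hBH : Bᴴ = ∑ p, star (x p) • (PC * (F p)ᴴ) := by
      rw [hBdef]
      simp [Matrix.conjTranspose_sum, Matrix.conjTranspose_smul, Matrix.conjTranspose_mul,
        hPCH.eq]
    have hBB : Bᴴ * B = (star x ⬝ᵥ (Matrix.of Λ) *ᵥ x) • PC := by
      rw [hBH, hBdef, Finset.sum_mul_sum]
      have hterm : ∀ p q, (star (x p) • (PC * (F p)ᴴ)) * (x q • (F q * PC))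
          = (star (x p) * (Λ p q * x q)) • PC := by
        intro p q
        rw [smul_mul_smul_comm, ← mul_assoc, hKL, smul_smul]
        ring_nf
      simp_rw [hterm, ← Finset.sum_smul]
      congr 1
      simp [dotProduct, Matrix.mulVec, Finset.mul_sum]
    have h1 : (Bᴴ * B).trace = (star x ⬝ᵥ (Matrix.of Λ) *ᵥ x) * (T:ℂ) := by
      rw [hBB, Matrix.trace_smul, hPCtr, smul_eq_mul]
    have h2 := trace_cms B
    set S : ℝ := ∑ i, ∑ j, Complex.normSq (B i j) with hSdef
    have hS0 : 0 ≤ S :=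
      Finset.sum_nonneg fun i _ => Finset.sum_nonneg fun j _ => Complex.normSq_nonneg _
    have hx : star x ⬝ᵥ (Matrix.of Λ) *ᵥ x = ((S / T : ℝ) : ℂ) := by
      have h3 : (star x ⬝ᵥ (Matrix.of Λ) *ᵥ x) * (T:ℂ) = (S:ℂ) := h1.symm.trans h2
      have hTc : (T:ℂ) ≠ 0 := by exact_mod_cast hTne
      field_simp
      rw [Complex.ofReal_div, eq_div_iff hTc, h3]
    rw [hx]
    exact Complex.zero_le_real.2 (div_nonneg hS0 hT0)
  -- spectral decomposition
  set U : Matrix J J ℂ := (hΛMH.eigenvectorUnitary : Matrix J J ℂ) with hUdef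
  set d : J → ℝ := hΛMH.eigenvalues with hddef
  have hd : ∀ μ, 0 ≤ d μ := fun μ => hΛPSD.eigenvalues_nonneg μ
  have hUU : U * Uᴴ = 1 := by
    rw [hUdef, ← Matrix.star_eq_conjTranspose]
    exact Matrix.mem_unitaryGroup_iff.mp hΛMH.eigenvectorUnitary.2
  have hdiagM : Uᴴ * (Matrix.of Λ) * U = Matrix.diagonal (fun μ => (d μ : ℂ)) := by
    rw [hUdef, ← Matrix.star_eq_conjTranspose]
    have h := hΛMH.conjStarAlgAut_star_eigenvectorUnitary
    rw [Unitary.conjStarAlgAut_apply] at h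
    simpa [Function.comp_def] using h
  have hUrow : ∀ q p, ∑ ν, U q ν * star (U p ν) = if q = p then 1 else 0 := by
    intro q p
    have := congrFun (congrFun hUU q) p
    simpa [Matrix.mul_apply, Matrix.conjTranspose_apply, Matrix.one_apply] using this
  have hDIAG : ∀ μ ν, (∑ p, ∑ q, star (U p μ) * Λ p q * U q ν)
      = if μ = ν then (d μ : ℂ) else 0 := by
    intro μ ν
    have := congrFun (congrFun hdiagM μ) ν
    simp only [Matrix.mul_apply, Matrix.conjTranspose_apply, Matrix.of_apply,
      Matrix.diagonal_apply] at this
    rw [← this, Finset.sum_comm]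
    refine Finset.sum_congr rfl fun q _ => ?_
    rw [Finset.sum_mul]
  -- the operators A μ
  set A : J → Matrix (Fin dS) (Fin dS) ℂ := fun μ => ∑ p, U p μ • (F p * PC) with hAdef
  have hAPC : ∀ μ, A μ * PC = A μ := by
    intro μ
    rw [hAdef]
    simp [Finset.sum_mul, Matrix.smul_mul, mul_assoc, hPCproj]
  have hAA : ∀ μ ν, (A μ)ᴴ * A ν = (if μ = ν then (d μ : ℂ) else 0) • PC := by
    intro μ ν
    have hAH : (A μ)ᴴ = ∑ p, star (U p μ) • (PC * (F p)ᴴ) := by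
      rw [hAdef]
      simp [Matrix.conjTranspose_sum, Matrix.conjTranspose_smul, Matrix.conjTranspose_mul,
        hPCH.eq]
    rw [hAH, hAdef, Finset.sum_mul_sum]
    have hterm : ∀ p q, (star (U p μ) • (PC * (F p)ᴴ)) * (U q ν • (F q * PC))
        = (star (U p μ) * Λ p q * U q ν) • PC := by
      intro p q
      rw [smul_mul_smul_comm, ← mul_assoc, hKL, smul_smul]
      ring_nf
    simp_rw [hterm, ← Finset.sum_smul]
    rw [hDIAG]
  -- A μ vanishes on zero eigenvalues
  have hA0 : ∀ μ, d μ = 0 → A μ = 0 := by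
    intro μ h
    have h2 := hAA μ μ
    rw [if_pos rfl, h] at h2
    simp only [Complex.ofReal_zero, zero_smul] at h2
    exact Matrix.conjTranspose_mul_self_eq_zero.mp h2
  set W : J → Matrix (Fin dS) (Fin dS) ℂ :=
    fun μ => (((Real.sqrt (d μ))⁻¹ : ℝ) : ℂ) • A μ with hWdef
  have hsqd : ∀ μ, (((Real.sqrt (d μ))⁻¹ : ℝ) : ℂ) * ((d μ : ℝ) : ℂ)
      = ((Real.sqrt (d μ) : ℝ) : ℂ) := by
    intro μ
    rw [← Complex.ofReal_mul]
    congr 1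
    rcases eq_or_lt_of_le (hd μ) with h0 | h0
    · rw [← h0]; simp
    · have hs : Real.sqrt (d μ) ≠ 0 := ne_of_gt (Real.sqrt_pos.mpr h0)
      field_simp
      exact (Real.sq_sqrt (hd μ)).symm
  have hWA : ∀ μ ν, (W μ)ᴴ * A ν
      = (if μ = ν then ((Real.sqrt (d μ) : ℝ) : ℂ) else 0) • PC := by
    intro μ ν
    rw [hWdef]
    simp only [Matrix.conjTranspose_smul, Matrix.smul_mul, hAA]
    rw [smul_smul]
    by_cases h : μ = ν
    · subst h
      rw [if_pos rfl, if_pos rfl, Complex.star_def, Complex.conj_ofReal, hsqd]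
    · rw [if_neg h, if_neg h, mul_zero]
  have hWPC : ∀ μ, W μ * PC = W μ := by
    intro μ
    rw [hWdef]
    simp only [Matrix.smul_mul, hAPC]
  set Q : Matrix (Fin dS) (Fin dS) ℂ := ∑ μ, W μ * (W μ)ᴴ with hQdef
  have hQH : Qᴴ = Q := by
    rw [hQdef, Matrix.conjTranspose_sum]
    exact Finset.sum_congr rfl fun μ _ => by
      rw [Matrix.conjTranspose_mul, Matrix.conjTranspose_conjTranspose]
  have hQA : ∀ ν, Q * A ν = A ν := by
    intro ν
    rw [hQdef, Finset.sum_mul]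
    have h1 : ∀ μ, W μ * (W μ)ᴴ * A ν
        = (if μ = ν then ((Real.sqrt (d μ) : ℝ) : ℂ) else 0) • W μ := by
      intro μ
      rw [mul_assoc, hWA, mul_smul_comm, hWPC]
    simp_rw [h1, ite_smul, zero_smul, Finset.sum_ite_eq', Finset.mem_univ, if_pos]
    rw [hWdef]
    simp only [smul_smul]
    rcases eq_or_lt_of_le (hd ν) with h0 | h0
    · rw [hA0 ν h0.symm]; simp
    · have hs : Real.sqrt (d ν) ≠ 0 := ne_of_gt (Real.sqrt_pos.mpr h0)
      rw [← Complex.ofReal_mul, mul_inv_cancel₀ hs]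
      simp
  have hQW : ∀ μ, Q * W μ = W μ := by
    intro μ
    rw [hWdef, mul_smul_comm, hQA]
  have hQQ : Q * Q = Q := by
    nth_rewrite 2 [hQdef]
    rw [Finset.mul_sum]
    simp_rw [← mul_assoc, hQW]
    exact hQdef.symm
  have hFPC : ∀ p, F p * PC = ∑ ν, star (U p ν) • A ν := by
    intro p
    rw [eq_comm, hAdef]
    simp only
    calc ∑ ν, star (U p ν) • ∑ q, U q ν • (F q * PC)
        = ∑ ν, ∑ q, (U q ν * star (U p ν)) • (F q * PC) := by
          simp_rw [Finset.smul_sum, smul_smul, mul_comm]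
      _ = ∑ q, (∑ ν, U q ν * star (U p ν)) • (F q * PC) := by
          rw [Finset.sum_comm]
          simp_rw [Finset.sum_smul]
      _ = F p * PC := by
          simp_rw [hUrow]
          simp [ite_smul, zero_smul]
  have hQF : ∀ p, Q * (F p * PC) = F p * PC := by
    intro p
    rw [hFPC, Finset.mul_sum]
    simp_rw [mul_smul_comm, hQA]
  have hWF : ∀ μ p, (W μ)ᴴ * (F p * PC)
      = (star (U p μ) * ((Real.sqrt (d μ) : ℝ) : ℂ)) • PC := by
    intro μ p
    rw [hFPC, Finset.mul_sum]
    simp_rw [mul_smul_comm, hWA, smul_smul, mul_ite, mul_zero]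
    simp [ite_smul, zero_smul]
  have hUU' : Uᴴ * U = 1 := by
    rw [hUdef, ← Matrix.star_eq_conjTranspose]
    exact Matrix.mem_unitaryGroup_iff'.mp hΛMH.eigenvectorUnitary.2
  have hspecM : (Matrix.of Λ) = U * Matrix.diagonal (fun μ => ((d μ : ℝ) : ℂ)) * Uᴴ := by
    rw [← hdiagM]
    rw [show U * (Uᴴ * Matrix.of Λ * U) * Uᴴ = (U * Uᴴ) * Matrix.of Λ * (U * Uᴴ) by
      simp only [Matrix.mul_assoc], hUU, Matrix.one_mul, Matrix.mul_one]
  have hspec : ∀ p q, Λ p q = ∑ μ, U p μ * ((d μ : ℝ) : ℂ) * star (U q μ) := by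
    intro p q
    have h9 := congrFun (congrFun hspecM p) q
    simpa only [Matrix.mul_apply, Matrix.conjTranspose_apply, Matrix.of_apply,
      Matrix.diagonal_apply, mul_ite, mul_zero, ite_mul, zero_mul, Finset.sum_ite_eq,
      Finset.sum_ite_eq', Finset.mem_univ, if_true] using h9
  have hΛstar : ∀ p q, (∑ μ, star (U p μ) * U q μ * ((d μ : ℝ) : ℂ)) = Λ q p := by
    intro p q
    rw [hΛH q p, hspec p q, star_sum]
    refine Finset.sum_congr rfl fun μ _ => ?_
    simp only [star_mul', star_star, Complex.star_def, Complex.conj_ofReal, Complex.conj_conj]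
    ring
  -- construct the recovery operators
  set e : Fin (Fintype.card J) ≃ J := (Fintype.equivFin J).symm with hedef
  refine ⟨Fintype.card J,
    fun c => c.elim (1 - Q) (fun i => (W (e i))ᴴ), ?_, ?_⟩
  · rw [Fintype.sum_option]
    simp only [Option.elim]
    have h6 : ∑ i, ((W (e i))ᴴ)ᴴ * (W (e i))ᴴ = Q := by
      simp_rw [Matrix.conjTranspose_conjTranspose]
      rw [Equiv.sum_comp e (fun μ => W μ * (W μ)ᴴ)]
    have h7 : (1 - Q)ᴴ = 1 - Q := by
      rw [Matrix.conjTranspose_sub, Matrix.conjTranspose_one, hQH]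
    rw [h6, h7]
    have h8 : (1 - Q) * (1 - Q) = 1 - Q := by
      rw [mul_sub, sub_mul, sub_mul, hQQ]
      simp only [one_mul, mul_one]
      abel
    rw [h8]
    abel
  · intro p q X hX
    rw [Fintype.sum_option]
    simp only [Option.elim]
    have hsplit : F p * X * (F q)ᴴ = (F p * PC) * X * (F q * PC)ᴴ := by
      conv_lhs => rw [← hX]
      rw [Matrix.conjTranspose_mul, hPCH.eq]
      simp only [Matrix.mul_assoc]
    have hnone : (1 - Q) * (F p * X * (F q)ᴴ) * (1 - Q)ᴴ = 0 := by
      have h10 : (1 - Q) * (F p * PC) = 0 := by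
        rw [sub_mul, one_mul, hQF, sub_self]
      rw [hsplit, show (1 - Q) * ((F p * PC) * X * (F q * PC)ᴴ)
          = ((1 - Q) * (F p * PC)) * (X * (F q * PC)ᴴ) by simp only [Matrix.mul_assoc],
        h10, Matrix.zero_mul, Matrix.zero_mul]
    have hsome : ∀ μ, (W μ)ᴴ * (F p * X * (F q)ᴴ) * ((W μ)ᴴ)ᴴ
        = (star (U p μ) * U q μ * ((d μ : ℝ) : ℂ)) • X := by
      intro μ
      rw [Matrix.conjTranspose_conjTranspose, hsplit]
      have h11 : (W μ)ᴴ * ((F p * PC) * X * (F q * PC)ᴴ) * W μ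
          = ((W μ)ᴴ * (F p * PC)) * X * ((W μ)ᴴ * (F q * PC))ᴴ := by
        simp only [Matrix.conjTranspose_mul, Matrix.conjTranspose_conjTranspose, hPCH.eq,
          Matrix.mul_assoc]
      rw [h11, hWF, hWF]
      rw [Matrix.conjTranspose_smul, hPCH.eq]
      rw [Matrix.smul_mul, Matrix.mul_smul, Matrix.smul_mul, hX, smul_smul]
      congr 1
      rw [star_mul', star_star, Complex.star_def, Complex.conj_ofReal]
      have h12 : ((Real.sqrt (d μ) : ℝ) : ℂ) * ((Real.sqrt (d μ) : ℝ) : ℂ)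
          = ((d μ : ℝ) : ℂ) := by
        rw [← Complex.ofReal_mul, Real.mul_self_sqrt (hd μ)]
      linear_combination (U q μ * (starRingEnd ℂ) (U p μ)) * h12
    rw [hnone, zero_add]
    simp_rw [hsome]
    rw [Equiv.sum_comp e (fun μ => (star (U p μ) * U q μ * ((d μ : ℝ) : ℂ)) • X)]
    rw [← Finset.sum_smul, hΛstar]


/-- Sub-trace-preserving version of the OSQEC theorem: if the CP map `E ~ {E_a}`
satisfies `P (Σ_a E_a† E_a) P = γ² P` on the code (`γ > 0`) and the OSQEC
conditions hold with a Hermitian `Λ`, then there is a CPTP recovery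
`R = R_S ⊗ id_B` with `Tr_B{(R∘E)(ρ)} = γ² Tr_B{ρ}` for all code states `ρ`. -/
theorem stmt_11 {dS dB : ℕ} {ι : Type*} [Fintype ι]
    (PC : Matrix (Fin dS) (Fin dS) ℂ)
    (hPCH : PC.IsHermitian) (hPCproj : PC * PC = PC)
    (E : ι → Matrix (Fin dS × Fin dB) (Fin dS × Fin dB) ℂ)
    (γ : ℝ) (hγ : 0 < γ)
    (hsub : (PC ⊗ₖ (1 : Matrix (Fin dB) (Fin dB) ℂ)) * (∑ a, (E a)ᴴ * E a) *
        (PC ⊗ₖ (1 : Matrix (Fin dB) (Fin dB) ℂ))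
      = ((γ : ℂ) ^ 2) • (PC ⊗ₖ (1 : Matrix (Fin dB) (Fin dB) ℂ)))
    (Λ : (ι × Fin dB × Fin dB) → (ι × Fin dB × Fin dB) → ℂ)
    (hΛH : ∀ p q, Λ p q = star (Λ q p))
    (hKL : ∀ a b k ℓ m n, PC * (pmel (E a) k ℓ)ᴴ * pmel (E b) m n * PC
        = Λ (a, k, ℓ) (b, m, n) • PC) :
    ∃ (κ : Type) (_ : Fintype κ) (R : κ → Matrix (Fin dS) (Fin dS) ℂ),
      (∑ c, (R c)ᴴ * R c = 1) ∧
      ∀ ρ : Matrix (Fin dS × Fin dB) (Fin dS × Fin dB) ℂ,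
        ρ.PosSemidef → ρ.trace = 1 →
        (PC ⊗ₖ (1 : Matrix (Fin dB) (Fin dB) ℂ)) * ρ *
          (PC ⊗ₖ (1 : Matrix (Fin dB) (Fin dB) ℂ)) = ρ →
        trB (∑ c, (R c ⊗ₖ (1 : Matrix (Fin dB) (Fin dB) ℂ)) *
              (∑ a, E a * ρ * (E a)ᴴ) *
              (R c ⊗ₖ (1 : Matrix (Fin dB) (Fin dB) ℂ))ᴴ)
          = ((γ : ℂ) ^ 2) • trB ρ := by
  classical
  by_cases hPC0 : PC = 0
  · refine ⟨Fin 1, inferInstance, fun _ => 1, by simp, ?_⟩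
    intro ρ hpos htr hcode
    exfalso
    rw [hPC0] at hcode
    simp only [Matrix.zero_kronecker, Matrix.zero_mul, Matrix.mul_zero] at hcode
    rw [← hcode] at htr
    simp [Matrix.trace] at htr
  · obtain ⟨N, R, hR1, hR2⟩ := recovery_exists PC hPCH hPCproj hPC0
      (fun p : ι × Fin dB × Fin dB => pmel (E p.1) p.2.1 p.2.2) Λ hΛH
      (fun p q => hKL p.1 q.1 p.2.1 p.2.2 q.2.1 q.2.2)
    -- scalar cancellation against PC
    have hcancel : ∀ c₁ c₂ : ℂ, c₁ • PC = c₂ • PC → c₁ = c₂ := by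
      intro c₁ c₂ h
      obtain ⟨i, j, hij⟩ : ∃ i j, PC i j ≠ 0 := by
        by_contra hc
        push_neg at hc
        exact hPC0 (by ext i j; simpa using hc i j)
      have h2 := congrFun (congrFun h i) j
      simp only [Matrix.smul_apply, smul_eq_mul] at h2
      exact mul_right_cancel₀ hij h2
    have hΛsum : ∀ m n, (∑ a, ∑ k, Λ (a, k, m) (a, k, n))
        = (γ : ℂ) ^ 2 * (if m = n then 1 else 0) := by
      intro m n
      have h1 := congrArg (fun M => pmel M m n) hsub
      simp only [pmel_mul_kron, pmel_kron_mul, pmel_smul, pmel_kron] at h1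
      have h2 : pmel (∑ a, (E a)ᴴ * E a) m n
          = ∑ a, ∑ k, (pmel (E a) k m)ᴴ * pmel (E a) k n := by
        rw [pmel_sum]
        refine Finset.sum_congr rfl fun a _ => ?_
        rw [pmel_mul]
        refine Finset.sum_congr rfl fun k _ => ?_
        rw [pmel_conjTranspose]
      rw [h2] at h1
      have h3 : PC * (∑ a, ∑ k, (pmel (E a) k m)ᴴ * pmel (E a) k n) * PC
          = (∑ a, ∑ k, Λ (a, k, m) (a, k, n)) • PC := by
        rw [Finset.mul_sum, Finset.sum_mul]
        rw [Finset.sum_smul]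
        refine Finset.sum_congr rfl fun a _ => ?_
        rw [Finset.mul_sum, Finset.sum_mul, Finset.sum_smul]
        refine Finset.sum_congr rfl fun k _ => ?_
        rw [← hKL a a k m k n]
        simp only [Matrix.mul_assoc]
      rw [h3] at h1
      apply hcancel
      rw [h1]
      by_cases h : m = n
      · simp [h, smul_smul]
      · simp [h, smul_smul]
    refine ⟨Option (Fin N), inferInstance, R, hR1, ?_⟩
    intro ρ hpos htr hcode
    have hr : ∀ m n, PC * pmel ρ m n * PC = pmel ρ m n := by
      intro m n
      have h := congrArg (fun M => pmel M m n) hcode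
      simpa only [pmel_mul_kron, pmel_kron_mul] using h
    rw [trB_eq, trB_eq]
    have hswap : ∀ (f : Fin dB → ι → Fin dB → Fin dB → Matrix (Fin dS) (Fin dS) ℂ),
        (∑ k, ∑ a, ∑ n, ∑ m, f k a n m) = ∑ n, ∑ m, ∑ a, ∑ k, f k a n m := by
      intro f
      calc (∑ k, ∑ a, ∑ n, ∑ m, f k a n m)
          = ∑ x : Fin dB × ι × Fin dB × Fin dB, f x.1 x.2.1 x.2.2.1 x.2.2.2 := by
            simp_rw [Fintype.sum_prod_type]
        _ = ∑ y : Fin dB × Fin dB × ι × Fin dB, f y.2.2.2 y.2.2.1 y.1 y.2.1 := by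
            refine Fintype.sum_equiv
              ⟨fun x => (x.2.2.1, x.2.2.2, x.2.1, x.1),
               fun y => (y.2.2.2, y.2.2.1, y.1, y.2.1),
               fun ⟨k, a, n, m⟩ => rfl, fun ⟨n, m, a, k⟩ => rfl⟩ _ _ fun ⟨k, a, n, m⟩ => rfl
        _ = ∑ n, ∑ m, ∑ a, ∑ k, f k a n m := by
            simp_rw [Fintype.sum_prod_type]
    calc (∑ k, pmel (∑ c, (R c ⊗ₖ (1 : Matrix (Fin dB) (Fin dB) ℂ)) *
            (∑ a, E a * ρ * (E a)ᴴ) * (R c ⊗ₖ (1 : Matrix (Fin dB) (Fin dB) ℂ))ᴴ) k k)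
        = ∑ k, ∑ a, ∑ n, ∑ m, ∑ c, R c *
            (pmel (E a) k m * pmel ρ m n * (pmel (E a) k n)ᴴ) * (R c)ᴴ := by
          refine Finset.sum_congr rfl fun k _ => ?_
          rw [pmel_sum]
          have hM : ∀ c, pmel ((R c ⊗ₖ (1 : Matrix (Fin dB) (Fin dB) ℂ)) *
              (∑ a, E a * ρ * (E a)ᴴ) * (R c ⊗ₖ (1 : Matrix (Fin dB) (Fin dB) ℂ))ᴴ) k k
              = ∑ a, ∑ n, ∑ m, R c *
                (pmel (E a) k m * pmel ρ m n * (pmel (E a) k n)ᴴ) * (R c)ᴴ := by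
            intro c
            rw [kron_one_conjTranspose, pmel_mul_kron, pmel_kron_mul]
            have hX : pmel (∑ a, E a * ρ * (E a)ᴴ) k k
                = ∑ a, ∑ n, ∑ m, pmel (E a) k m * pmel ρ m n * (pmel (E a) k n)ᴴ := by
              rw [pmel_sum]
              refine Finset.sum_congr rfl fun a _ => ?_
              rw [pmel_mul]
              refine Finset.sum_congr rfl fun n _ => ?_
              rw [pmel_mul, pmel_conjTranspose, Finset.sum_mul]
            rw [hX]
            simp_rw [Finset.mul_sum, Finset.sum_mul]
          simp_rw [hM]
          rw [Finset.sum_comm]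
          refine Finset.sum_congr rfl fun a _ => ?_
          rw [Finset.sum_comm]
          refine Finset.sum_congr rfl fun n _ => ?_
          rw [Finset.sum_comm]
      _ = ∑ k, ∑ a, ∑ n, ∑ m, Λ (a, k, n) (a, k, m) • pmel ρ m n := by
          refine Finset.sum_congr rfl fun k _ => Finset.sum_congr rfl fun a _ =>
            Finset.sum_congr rfl fun n _ => Finset.sum_congr rfl fun m _ => ?_
          exact hR2 (a, k, m) (a, k, n) (pmel ρ m n) (hr m n)
      _ = ∑ n, ∑ m, ∑ a, ∑ k, Λ (a, k, n) (a, k, m) • pmel ρ m n := by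
          exact hswap _
      _ = ((γ : ℂ) ^ 2) • ∑ k, pmel ρ k k := by
          simp_rw [← Finset.sum_smul]
          have h4 : ∀ n m, (∑ a, ∑ k, Λ (a, k, n) (a, k, m))
              = (γ : ℂ) ^ 2 * (if n = m then 1 else 0) := fun n m => hΛsum n m
          simp_rw [h4]
          rw [Finset.smul_sum]
          refine Finset.sum_congr rfl fun n _ => ?_
          simp [mul_ite, mul_one, mul_zero, ite_smul, zero_smul]

end OSQEC11
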